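/- Let 𝒞 be a model category. Suppose given a commutative square consisting of morphisms f : A → B, i : A → C, u : C → D and p : B → D with p∘f = u∘i, where i is a cofibration and p is both a fibration and a weak equivalence. If ℓ, ℓ′ : C → B are two lifts in this square (i.e., ℓ∘i = f = ℓ′∘i and p∘ℓ = u = p∘ℓ′), then ℓ and ℓ′ are left homotopic. -/

import Mathlib

open CategoryTheory CategoryTheory.Limits

universe v u

/-- A morphism `g` is a retract of a morphism `f` (in the arrow category). -/
def IsRetractOfMap {C : Type u} [Category.{v} C] {A B X Y : C}
    (g : A ⟶ B) (f : X ⟶ Y) : Prop :=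
  ∃ (iA : A ⟶ X) (rA : X ⟶ A) (iB : B ⟶ Y) (rB : Y ⟶ B),
    iA ≫ rA = 𝟙 A ∧ iB ≫ rB = 𝟙 B ∧ iA ≫ f = g ≫ iB ∧ rA ≫ g = f ≫ rB

/-- A (Quillen) model category: a complete and cocomplete category together with three
classes of morphisms — weak equivalences, cofibrations and fibrations — satisfying
Quillen's axioms: two-out-of-three for weak equivalences, closure of all three classes
under retracts, the lifting axiom for (acyclic cofibration, fibration) and
(cofibration, acyclic fibration) pairs, and the two factorization axioms. -/
class ModelCategory (C : Type u) [Category.{v} C] [HasLimits C] [HasColimits C] where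
  weq : MorphismProperty C
  cof : MorphismProperty C
  fib : MorphismProperty C
  weq_comp : ∀ {X Y Z : C} (f : X ⟶ Y) (g : Y ⟶ Z), weq f → weq g → weq (f ≫ g)
  weq_of_comp_left : ∀ {X Y Z : C} (f : X ⟶ Y) (g : Y ⟶ Z), weq f → weq (f ≫ g) → weq g
  weq_of_comp_right : ∀ {X Y Z : C} (f : X ⟶ Y) (g : Y ⟶ Z), weq g → weq (f ≫ g) → weq f
  weq_retract : ∀ {A B X Y : C} (g : A ⟶ B) (f : X ⟶ Y),
    IsRetractOfMap g f → weq f → weq g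
  cof_retract : ∀ {A B X Y : C} (g : A ⟶ B) (f : X ⟶ Y),
    IsRetractOfMap g f → cof f → cof g
  fib_retract : ∀ {A B X Y : C} (g : A ⟶ B) (f : X ⟶ Y),
    IsRetractOfMap g f → fib f → fib g
  lifting_acyclic_cof : ∀ {A B X Y : C} (i : A ⟶ B) (p : X ⟶ Y),
    cof i → weq i → fib p → HasLiftingProperty i p
  lifting_acyclic_fib : ∀ {A B X Y : C} (i : A ⟶ B) (p : X ⟶ Y),
    cof i → fib p → weq p → HasLiftingProperty i p
  factor_cof_acyclicFib : ∀ {X Y : C} (f : X ⟶ Y),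
    ∃ (Z : C) (g : X ⟶ Z) (h : Z ⟶ Y), cof g ∧ fib h ∧ weq h ∧ g ≫ h = f
  factor_acyclicCof_fib : ∀ {X Y : C} (f : X ⟶ Y),
    ∃ (Z : C) (g : X ⟶ Z) (h : Z ⟶ Y), cof g ∧ weq g ∧ fib h ∧ g ≫ h = f

/-- An object is cofibrant if the unique map from the initial object is a cofibration. -/
def Cofibrant {C : Type u} [Category.{v} C] [HasLimits C] [HasColimits C]
    [ModelCategory C] (A : C) : Prop :=
  ModelCategory.cof (initial.to A)

/-- Two morphisms `f₀, f₁ : A ⟶ X` are left homotopic if there is a cylinder object for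
`A` — a factorization of the fold map `A ⊔ A → A` as a cofibration `(i₀, i₁)` followed
by a weak equivalence `p` — and a morphism `H : Cyl(A) ⟶ X` with `i₀ ≫ H = f₀` and
`i₁ ≫ H = f₁`. -/
def LeftHomotopic {C : Type u} [Category.{v} C] [HasLimits C] [HasColimits C]
    [ModelCategory C] {A X : C} (f₀ f₁ : A ⟶ X) : Prop :=
  ∃ (Z : C) (i₀ i₁ : A ⟶ Z) (p : Z ⟶ A),
    ModelCategory.cof (coprod.desc i₀ i₁) ∧ ModelCategory.weq p ∧
    i₀ ≫ p = 𝟙 A ∧ i₁ ≫ p = 𝟙 A ∧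
    ∃ H : Z ⟶ X, i₀ ≫ H = f₀ ∧ i₁ ≫ H = f₁

/-- **Uniqueness of lifts up to homotopy** (the 'moreover' clause of Lemma 3.5 of the
paper, in the acyclic fibration case).

In a model category, given a commutative square `p ∘ f = u ∘ i` with `f : A ⟶ B`,
`i : A ⟶ Z`, `u : Z ⟶ D`, `p : B ⟶ D`, where `i` is a cofibration and `p` is both a
fibration and a weak equivalence, any two lifts `ℓ, ℓ' : Z ⟶ B` in the square
(`ℓ ∘ i = f = ℓ' ∘ i` and `p ∘ ℓ = u = p ∘ ℓ'`) are left homotopic. -/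
theorem lifts_leftHomotopic
    {C : Type u} [Category.{v} C] [HasLimits C] [HasColimits C] [ModelCategory C]
    {A B Z D : C} (f : A ⟶ B) (i : A ⟶ Z) (u : Z ⟶ D) (p : B ⟶ D)
    (hsq : f ≫ p = i ≫ u)
    (hcof : ModelCategory.cof i) (hfib : ModelCategory.fib p)
    (hweq : ModelCategory.weq p)
    (ℓ ℓ' : Z ⟶ B)
    (hℓ₁ : i ≫ ℓ = f) (hℓ₂ : ℓ ≫ p = u)
    (hℓ'₁ : i ≫ ℓ' = f) (hℓ'₂ : ℓ' ≫ p = u) :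
    LeftHomotopic ℓ ℓ' := by
  obtain ⟨Cyl, j, q, hjcof, hqfib, hqweq, hfac⟩ :=
    ModelCategory.factor_cof_acyclicFib (coprod.desc (𝟙 Z) (𝟙 Z))
  have h0 : (coprod.inl ≫ j) ≫ q = 𝟙 Z := by rw [Category.assoc, hfac]; exact coprod.inl_desc _ _
  have h1 : (coprod.inr ≫ j) ≫ q = 𝟙 Z := by rw [Category.assoc, hfac]; exact coprod.inr_desc _ _
  have hsq' : CommSq (coprod.desc ℓ ℓ') j p (q ≫ u) := by
    constructor
    apply coprod.hom_ext
    · simp [hℓ₂, ← Category.assoc, h0]; exact coprod.inl_desc _ _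
    · simp [hℓ'₂, ← Category.assoc, h1]; exact coprod.inr_desc _ _
  have hlp := ModelCategory.lifting_acyclic_fib j p hjcof hfib hweq
  obtain ⟨⟨⟨H, hH1, hH2⟩⟩⟩ := hlp.sq_hasLift hsq'
  refine ⟨Cyl, coprod.inl ≫ j, coprod.inr ≫ j, q, ?_, hqweq, h0, h1, H, ?_, ?_⟩
  · have hdj : coprod.desc (coprod.inl ≫ j) (coprod.inr ≫ j) = j := by
      apply coprod.hom_ext <;> [exact coprod.inl_desc _ _; exact coprod.inr_desc _ _]
    rw [hdj]; exact hjcof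
  · have := coprod.inl ≫= hH1; simpa using this.trans (coprod.inl_desc _ _)
  · have := coprod.inr ≫= hH1; simpa using this.trans (coprod.inr_desc _ _)
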